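/- Let d ≥ 2, let (U, 𝔘) be a measurable space with a σ-finite measure ν, and let δ₀, R, κ > 0. Let ϱ : [0,∞) → [0,∞) be continuous, nondecreasing, concave, with ϱ(r) > 0 for r > 0 and ϱ(r) ≤ (1+r)²·ϱ(r/(1+r)) for all r > 0. Let b : ℝ^d → ℝ^d, σ : ℝ^d → ℝ^{d×d} and c : ℝ^d × U → ℝ^d (with u ↦ c(x,u) measurable) satisfy, for all x, z with |x| ∨ |z| ≤ R and |x − z| ≤ δ₀: ∫_U min( |c(x,u)−c(z,u)|², 4|x−z|·|c(x,u)−c(z,u)| ) ν(du) + 2⟨x−z, b(x)−b(z)⟩ + ‖σ(x)−σ(z)‖² ≤ 2κ·|x−z|·ϱ(|x−z|), where ‖·‖ is the Frobenius norm. Then for all such x, z with x ≠ z, the function u ↦ G(x−z+c(x,u)−c(z,u)) − G(x−z) − ⟨∇G(x−z), c(x,u)−c(z,u)⟩ is ν-integrable and (1/2)·tr( (σ(x)−σ(z))(σ(x)−σ(z))ᵀ ∇²G(x−z) ) + ⟨b(x)−b(z), ∇G(x−z)⟩ + ∫_U [ G(x−z+c(x,u)−c(z,u)) − G(x−z) −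 ⟨∇G(x−z), c(x,u)−c(z,u)⟩ ] ν(du) ≤ κ·ϱ(F(|x−z|)). -/

import Mathlib

open MeasureTheory Matrix
open scoped RealInnerProductSpace

/-- `F r = r / (1 + r)`. -/
noncomputable def F (r : ℝ) : ℝ := r / (1 + r)

/-- `G w = |w| / (1 + |w|)` on `ℝ^d`. -/
noncomputable def G (d : ℕ) (w : EuclideanSpace ℝ (Fin d)) : ℝ := ‖w‖ / (1 + ‖w‖)

/-- The gradient `∇G`. -/
noncomputable def gradG (d : ℕ) (w : EuclideanSpace ℝ (Fin d)) : EuclideanSpace ℝ (Fin d) :=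
  gradient (G d) w

/-- The Hessian matrix `∇²G`. -/
noncomputable def hessG (d : ℕ) (w : EuclideanSpace ℝ (Fin d)) : Matrix (Fin d) (Fin d) ℝ :=
  Matrix.of fun i j =>
    iteratedFDeriv ℝ 2 (G d) w ![EuclideanSpace.single i 1, EuclideanSpace.single j 1]

variable {d : ℕ}
local notation "E" => EuclideanSpace ℝ (Fin d)

lemma hasFDerivAt_norm (w : E) (hw : w ≠ 0) :
    HasFDerivAt (fun y : E => ‖y‖) (‖w‖⁻¹ • innerSL ℝ w) w := by
  have hn : (0:ℝ) < ‖w‖ := norm_pos_iff.2 hw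
  have h1 : HasFDerivAt (fun y : E => ‖y‖ ^ 2) (2 • innerSL ℝ w) w :=
    (hasStrictFDerivAt_norm_sq w).hasFDerivAt
  have h2 : HasDerivAt Real.sqrt (1 / (2 * Real.sqrt (‖w‖ ^ 2))) (‖w‖ ^ 2) :=
    Real.hasDerivAt_sqrt (by positivity)
  have h3 := h2.comp_hasFDerivAt w h1
  have he : (fun y : E => Real.sqrt (‖y‖ ^ 2)) = fun y : E => ‖y‖ := by
    funext y; rw [Real.sqrt_sq (norm_nonneg y)]
  rw [Function.comp_def, he] at h3
  refine h3.congr_fderiv ?_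
  rw [Real.sqrt_sq (norm_nonneg w)]
  ext v
  simp [smul_smul]
  field_simp

noncomputable def s1 (r : ℝ) : ℝ := (r * (1 + r) ^ 2)⁻¹
noncomputable def s2 (r : ℝ) : ℝ := -(((1 + r) ^ 2 + r * (2 * (1 + r)))) / (r * (1 + r) ^ 2) ^ 2

lemma hasDerivAt_s1 {r : ℝ} (hr : 0 < r) : HasDerivAt s1 (s2 r) r := by
  have h1 : HasDerivAt (fun t : ℝ => t * (1 + t) ^ 2) ((1 + r) ^ 2 + r * (2 * (1 + r))) r := by
    have ha : HasDerivAt (fun t : ℝ => 1 + t) 1 r := (hasDerivAt_id r).const_add 1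
    have hb := ha.pow 2
    have := (hasDerivAt_id r).mul hb
    refine this.congr_deriv ?_; simp only [id, Pi.pow_apply]; ring
  have hne : r * (1 + r) ^ 2 ≠ 0 := by positivity
  exact h1.inv hne

lemma hasFDerivAt_G (w : E) (hw : w ≠ 0) :
    HasFDerivAt (G d) (s1 ‖w‖ • innerSL ℝ w) w := by
  have hn : (0:ℝ) < ‖w‖ := norm_pos_iff.2 hw
  have hφ : HasDerivAt (fun t : ℝ => t / (1 + t)) (((1 + ‖w‖) ^ 2)⁻¹) ‖w‖ := by
    have ha : HasDerivAt (fun t : ℝ => 1 + t) 1 ‖w‖ := (hasDerivAt_id _).const_add 1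
    have := (hasDerivAt_id ‖w‖).div ha (by positivity)
    refine this.congr_deriv ?_
    simp only [id]; field_simp; ring
  have h3 := hφ.comp_hasFDerivAt w (hasFDerivAt_norm w hw)
  have he : ((fun t : ℝ => t / (1 + t)) ∘ fun y : E => ‖y‖) = G d := rfl
  rw [he] at h3
  refine h3.congr_fderiv ?_
  rw [smul_smul, s1, mul_inv, mul_comm]

lemma gradG_eq (w : E) (hw : w ≠ 0) : gradient (G d) w = s1 ‖w‖ • w := by
  have h : HasGradientAt (G d) (s1 ‖w‖ • w) w := by
    rw [hasGradientAt_iff_hasFDerivAt]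
    refine (hasFDerivAt_G w hw).congr_fderiv ?_
    ext v
    simp [real_inner_smul_left]
  exact h.gradient

noncomputable def Jd (d : ℕ) :
    EuclideanSpace ℝ (Fin d) →L[ℝ] EuclideanSpace ℝ (Fin d) →L[ℝ] ℝ := innerSL ℝ

@[simp] lemma Jd_apply (u v : E) : Jd d u v = ⟪u, v⟫ := rfl

lemma hasFDerivAt_D (w : E) (hw : w ≠ 0) :
    HasFDerivAt (fun y : E => s1 ‖y‖ • innerSL ℝ y)
      (s1 ‖w‖ • Jd d + (s2 ‖w‖ • (‖w‖⁻¹ • innerSL ℝ w)).smulRight (innerSL ℝ w)) w := by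
  have hc : HasFDerivAt (fun y : E => s1 ‖y‖) (s2 ‖w‖ • (‖w‖⁻¹ • innerSL ℝ w)) w :=
    (hasDerivAt_s1 (norm_pos_iff.2 hw)).comp_hasFDerivAt w (hasFDerivAt_norm w hw)
  have hf : HasFDerivAt (fun y : E => innerSL ℝ y) (Jd d) w := (Jd d).hasFDerivAt
  exact hc.smul hf

lemma fderiv2_G_apply (w : E) (hw : w ≠ 0) (u v : E) :
    fderiv ℝ (fderiv ℝ (G d)) w u v =
      s2 ‖w‖ * (‖w‖⁻¹ * ⟪w, u⟫) * ⟪w, v⟫ + s1 ‖w‖ * ⟪u, v⟫ := by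
  have heq : fderiv ℝ (G d) =ᶠ[nhds w] (fun y : E => s1 ‖y‖ • innerSL ℝ y) := by
    filter_upwards [IsOpen.mem_nhds isOpen_compl_singleton hw] with y hy
    exact (hasFDerivAt_G y hy).fderiv
  rw [heq.fderiv_eq, (hasFDerivAt_D w hw).fderiv]
  simp [J, ContinuousLinearMap.smulRight_apply, real_inner_smul_left]
  ring

lemma hessG_apply (w : E) (hw : w ≠ 0) (i j : Fin d) :
    hessG d w i j = (s2 ‖w‖ * ‖w‖⁻¹) * (w i * w j) + s1 ‖w‖ * (if i = j then 1 else 0) := by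
  show iteratedFDeriv ℝ 2 (G d) w ![EuclideanSpace.single i 1, EuclideanSpace.single j 1] = _
  rw [iteratedFDeriv_two_apply]
  simp only [Matrix.cons_val_zero, Matrix.cons_val_one, Matrix.head_cons]
  rw [fderiv2_G_apply w hw]
  simp [EuclideanSpace.inner_single_right, EuclideanSpace.inner_single_left,
    EuclideanSpace.single_apply]
  rcases eq_or_ne i j with h | h
  · subst h; simp; ring
  · simp [h, Ne.symm h]; ring

lemma trace_bound (w : E) (hw : w ≠ 0) (a : Matrix (Fin d) (Fin d) ℝ) :
    Matrix.trace (a * aᵀ * hessG d w) ≤ s1 ‖w‖ * ∑ i, ∑ j, (a i j)^2 := by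
  have hc2 : s2 ‖w‖ * ‖w‖⁻¹ ≤ 0 := by
    apply mul_nonpos_of_nonpos_of_nonneg
    · have hr : (0:ℝ) < ‖w‖ := norm_pos_iff.2 hw
      rw [s2]
      apply div_nonpos_of_nonpos_of_nonneg
      · nlinarith
      · positivity
    · positivity
  have htr : Matrix.trace (a * aᵀ * hessG d w) =
      (s2 ‖w‖ * ‖w‖⁻¹) * (∑ k, (∑ i, a i k * w i)^2) + s1 ‖w‖ * ∑ i, ∑ j, (a i j)^2 := by
    have h1 : Matrix.trace (a * aᵀ * hessG d w) =
        ∑ i, ∑ j, (∑ k, a i k * a j k) * hessG d w j i := by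
      simp [Matrix.trace, Matrix.diag, Matrix.mul_apply, Matrix.transpose_apply]
    rw [h1]
    have h2 : ∀ i j : Fin d, (∑ k, a i k * a j k) * hessG d w j i =
        (s2 ‖w‖ * ‖w‖⁻¹) * ((∑ k, a i k * a j k) * (w i * w j)) +
        s1 ‖w‖ * ((∑ k, a i k * a j k) * (if i = j then 1 else 0)) := by
      intro i j
      rw [hessG_apply w hw j i]
      rcases eq_or_ne i j with h | h
      · subst h; simp; ring
      · simp [h, Ne.symm h]; ring
    simp_rw [h2, Finset.sum_add_distrib, ← Finset.mul_sum]
    congr 1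
    · congr 1
      have key : ∑ i, ∑ j, (∑ k, a i k * a j k) * (w i * w j)
          = ∑ k, (∑ i, a i k * w i)^2 := by
        have e1 : ∀ i j : Fin d, (∑ k, a i k * a j k) * (w i * w j)
            = ∑ k, (a i k * w i) * (a j k * w j) := by
          intro i j; rw [Finset.sum_mul]; apply Finset.sum_congr rfl; intro k _; ring
        simp_rw [e1]
        have e2 : ∀ i : Fin d, ∑ j, ∑ k, (a i k * w i) * (a j k * w j)
            = ∑ k, (a i k * w i) * (∑ j, a j k * w j) := by
          intro i
          rw [Finset.sum_comm]
          exact Finset.sum_congr rfl fun k _ => (Finset.mul_sum _ _ _).symm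
        simp_rw [e2]
        rw [Finset.sum_comm]
        apply Finset.sum_congr rfl; intro k _
        rw [← Finset.sum_mul, sq]
      rw [key]
    · congr 1
      apply Finset.sum_congr rfl; intro i _
      simp only [mul_ite, mul_one, mul_zero, Finset.sum_ite_eq, Finset.mem_univ, if_true]
      apply Finset.sum_congr rfl; intro k _
      rw [sq]
  rw [htr]
  have : (s2 ‖w‖ * ‖w‖⁻¹) * (∑ k, (∑ i, a i k * w i)^2) ≤ 0 :=
    mul_nonpos_of_nonpos_of_nonneg hc2 (by positivity)
  linarith


set_option maxHeartbeats 1000000 in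
lemma scalar_bounds (r s vn ip : ℝ) (hr : 0 < r) (hs : 0 ≤ s) (hvn : 0 ≤ vn)
    (h1 : |s - r| ≤ vn) (h2 : |ip| ≤ r * vn) (h3 : s^2 = r^2 + 2*ip + vn^2) :
    s/(1+s) - r/(1+r) - (r*(1+r)^2)⁻¹ * ip ≤ (2*r*(1+r)^2)⁻¹ * min (vn^2) (4*r*vn) ∧
    |s/(1+s) - r/(1+r) - (r*(1+r)^2)⁻¹ * ip| ≤ max 1 (2*r)⁻¹ * min (vn^2) (4*r*vn) := by
  obtain ⟨h1a, h1b⟩ := abs_le.mp h1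
  obtain ⟨h2a, h2b⟩ := abs_le.mp h2
  have hP : (0:ℝ) < 1 + r := by linarith
  have hQ : (0:ℝ) < 1 + s := by linarith
  have hD : (0:ℝ) < r * (1+s) * (1+r)^2 := by positivity
  have hsq : (s - r)^2 ≤ vn^2 := by nlinarith
  have hipsq : ip^2 ≤ r^2 * vn^2 := by nlinarith
  have hA0 : 0 ≤ s*r - r^2 - ip := by
    rcases le_or_gt (r^2 + ip) 0 with hc | hc
    · nlinarith [mul_nonneg hs hr.le]
    · have h4 : (r^2 + ip)^2 ≤ (s*r)^2 := by nlinarith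
      nlinarith [mul_nonneg hs hr.le]
  have hA2 : 2*r*(s - r) - 2*ip ≤ vn^2 := by nlinarith [sq_nonneg (s - r)]
  have e2 : s/(1+s) - r/(1+r) - (r*(1+r)^2)⁻¹ * ip
      = (r*(1+r)*(s-r) - ip*(1+s)) / (r*(1+s)*(1+r)^2) := by
    field_simp
    ring
  set N := r*(1+r)*(s-r) - ip*(1+s) with hN
  have hu1 : s/(1+s) - r/(1+r) - (r*(1+r)^2)⁻¹ * ip ≤ (2*r*(1+r)^2)⁻¹ * vn^2 := by
    rw [e2, inv_mul_eq_div, div_le_div_iff₀ hD (by positivity)]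
    have core1 : 2*N ≤ vn^2 * (1+s) := by
      nlinarith [mul_le_mul_of_nonneg_left hA2 hs, mul_nonneg hr.le (sq_nonneg (s-r))]
    nlinarith [mul_le_mul_of_nonneg_right core1 (show (0:ℝ) ≤ r*(1+r)^2 by positivity)]
  have hu2 : s/(1+s) - r/(1+r) - (r*(1+r)^2)⁻¹ * ip ≤ (2*r*(1+r)^2)⁻¹ * (4*r*vn) := by
    rw [e2, inv_mul_eq_div, div_le_div_iff₀ hD (by positivity)]
    have core2 : N ≤ 2*vn*(r*(1+s)) := by
      have t2 : -(ip*(1+s)) ≤ r*vn*(1+s) := by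
        have := mul_le_mul_of_nonneg_right h2a hQ.le
        nlinarith [this]
      rcases le_total r s with hc | hc
      · have t0 : (1+r)*(s-r) ≤ (1+s)*vn :=
          mul_le_mul (by linarith) h1b (by linarith) (by linarith)
        have t1 : r*((1+r)*(s-r)) ≤ r*((1+s)*vn) := mul_le_mul_of_nonneg_left t0 hr.le
        nlinarith [t1, t2]
      · have t1 : r*(1+r)*(s-r) ≤ 0 :=
          mul_nonpos_of_nonneg_of_nonpos (by positivity) (by linarith)
        nlinarith [t1, t2, mul_nonneg (mul_nonneg hr.le hvn) hQ.le]
    nlinarith [mul_le_mul_of_nonneg_right core2 (show (0:ℝ) ≤ r*(1+r)^2 by positivity)]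
  have hl1 : -(s/(1+s) - r/(1+r) - (r*(1+r)^2)⁻¹ * ip) ≤ vn^2 := by
    rw [e2, ← neg_div, div_le_iff₀ hD]
    nlinarith [mul_le_mul_of_nonneg_left hsq hr.le, mul_nonneg hQ.le hA0,
      mul_nonneg (mul_nonneg hr.le (sq_nonneg vn))
        (show (0:ℝ) ≤ (1+s)*(1+r)^2 - 1 by nlinarith)]
  have hl2 : -(s/(1+s) - r/(1+r) - (r*(1+r)^2)⁻¹ * ip) ≤ 2*vn := by
    rw [e2, ← neg_div, div_le_iff₀ hD]
    have a1 : ip*(1+s) ≤ r*vn*(1+s) := mul_le_mul_of_nonneg_right h2b hQ.le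
    have a2 : r*vn*(1+s) ≤ vn*(r*(1+s)*(1+r)^2) := by
      nlinarith [mul_nonneg (mul_nonneg (mul_nonneg hr.le hvn) hQ.le)
        (show (0:ℝ) ≤ (1+r)^2 - 1 by nlinarith)]
    have a3 : r*(1+r)*(r-s) ≤ r*(1+r)*vn :=
      mul_le_mul_of_nonneg_left (by linarith) (by positivity)
    have a4 : r*(1+r)*vn ≤ vn*(r*(1+s)*(1+r)^2) := by
      nlinarith [mul_nonneg (mul_nonneg (mul_nonneg hr.le hP.le) hvn)
        (show (0:ℝ) ≤ (1+s)*(1+r) - 1 by nlinarith)]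
    nlinarith [a1, a2, a3, a4]
  have hmin0 : 0 ≤ min (vn^2) (4*r*vn) := le_min (by positivity) (by positivity)
  constructor
  · rcases le_total (vn^2) (4*r*vn) with hm | hm
    · rw [min_eq_left hm]; exact hu1
    · rw [min_eq_right hm]; exact hu2
  · rw [abs_le]
    constructor
    · rw [neg_le]
      rcases le_total (vn^2) (4*r*vn) with hm | hm
      · rw [min_eq_left hm]
        have hmx : (1:ℝ) ≤ max 1 (2*r)⁻¹ := le_max_left _ _
        nlinarith [hl1, sq_nonneg vn]
      · rw [min_eq_right hm]
        have h24 : (2*r)⁻¹ * (4*r*vn) = 2*vn := by field_simp; ring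
        have hmx : (2*r)⁻¹ ≤ max 1 (2*r)⁻¹ := le_max_right _ _
        nlinarith [hl2, mul_nonneg (sub_nonneg.2 hmx)
          (show (0:ℝ) ≤ 4*r*vn by positivity)]
    · calc s/(1+s) - r/(1+r) - (r*(1+r)^2)⁻¹ * ip
          ≤ (2*r*(1+r)^2)⁻¹ * min (vn^2) (4*r*vn) := by
            rcases le_total (vn^2) (4*r*vn) with hm | hm
            · rw [min_eq_left hm]; exact hu1
            · rw [min_eq_right hm]; exact hu2
        _ ≤ max 1 (2*r)⁻¹ * min (vn^2) (4*r*vn) := by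
            apply mul_le_mul_of_nonneg_right _ hmin0
            refine le_trans ?_ (le_max_right _ _)
            apply inv_anti₀ (by positivity)
            nlinarith [sq_nonneg (1+r)]

set_option maxHeartbeats 1000000 in
theorem stmt_8 (d : ℕ) (hd : 2 ≤ d)
    {U : Type*} [MeasurableSpace U] (ν : Measure U) [SigmaFinite ν]
    (δ₀ R κ : ℝ) (hδ₀ : 0 < δ₀) (hR : 0 < R) (hκ : 0 < κ)
    (ϱ : ℝ → ℝ) (hϱc : ContinuousOn ϱ (Set.Ici 0)) (hϱm : MonotoneOn ϱ (Set.Ici 0))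
    (hϱconc : ConcaveOn ℝ (Set.Ici 0) ϱ) (hϱnn : ∀ r : ℝ, 0 ≤ r → 0 ≤ ϱ r)
    (hϱpos : ∀ r : ℝ, 0 < r → 0 < ϱ r)
    (hϱF : ∀ r : ℝ, 0 < r → ϱ r ≤ (1 + r) ^ 2 * ϱ (r / (1 + r)))
    (b : EuclideanSpace ℝ (Fin d) → EuclideanSpace ℝ (Fin d))
    (σ : EuclideanSpace ℝ (Fin d) → Matrix (Fin d) (Fin d) ℝ)
    (c : EuclideanSpace ℝ (Fin d) → U → EuclideanSpace ℝ (Fin d))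
    (hmeas : ∀ x, Measurable (c x))
    (hcoef : ∀ x z : EuclideanSpace ℝ (Fin d), max ‖x‖ ‖z‖ ≤ R → ‖x - z‖ ≤ δ₀ →
      Integrable (fun u =>
        min (‖c x u - c z u‖ ^ 2) (4 * ‖x - z‖ * ‖c x u - c z u‖)) ν ∧
      (∫ u, min (‖c x u - c z u‖ ^ 2) (4 * ‖x - z‖ * ‖c x u - c z u‖) ∂ν) +
        2 * ⟪x - z, b x - b z⟫ + (∑ i, ∑ j, (σ x i j - σ z i j) ^ 2) ≤
        2 * κ * ‖x - z‖ * ϱ ‖x - z‖) :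
    ∀ x z : EuclideanSpace ℝ (Fin d), max ‖x‖ ‖z‖ ≤ R → ‖x - z‖ ≤ δ₀ → x ≠ z →
      Integrable (fun u => G d (x - z + c x u - c z u) - G d (x - z) -
        ⟪gradG d (x - z), c x u - c z u⟫) ν ∧
      (1 / 2) * Matrix.trace ((σ x - σ z) * (σ x - σ z)ᵀ * hessG d (x - z)) +
        ⟪b x - b z, gradG d (x - z)⟫ +
        (∫ u, (G d (x - z + c x u - c z u) - G d (x - z) -
          ⟪gradG d (x - z), c x u - c z u⟫) ∂ν) ≤
        κ * ϱ (F ‖x - z‖) := by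
  
  intro x z hxzR hxzδ hne
  have hw : x - z ≠ 0 := sub_ne_zero.mpr hne
  set w : EuclideanSpace ℝ (Fin d) := x - z with hwdef
  have hr : (0:ℝ) < ‖w‖ := norm_pos_iff.2 hw
  set r : ℝ := ‖w‖ with hrdef
  obtain ⟨hg_int, hsum⟩ := hcoef x z hxzR hxzδ
  set v : U → EuclideanSpace ℝ (Fin d) := fun u => c x u - c z u with hvdef
  set g : U → ℝ := fun u => min (‖v u‖ ^ 2) (4 * r * ‖v u‖) with hgdef
  have hgradG : gradG d w = s1 r • w := gradG_eq w hw
  -- pointwise bounds for the integrand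
  have key : ∀ u : U,
      (G d (w + v u) - G d w - ⟪gradG d w, v u⟫ ≤ (2*r*(1+r)^2)⁻¹ * g u) ∧
      |G d (w + v u) - G d w - ⟪gradG d w, v u⟫| ≤ max 1 (2*r)⁻¹ * g u := by
    intro u
    have h1 : |‖w + v u‖ - r| ≤ ‖v u‖ := by
      have := abs_norm_sub_norm_le (w + v u) w
      rwa [add_sub_cancel_left] at this
    have h2 : |⟪w, v u⟫| ≤ r * ‖v u‖ := abs_real_inner_le_norm w (v u)
    have h3 : ‖w + v u‖^2 = r^2 + 2*⟪w, v u⟫ + ‖v u‖^2 := by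
      rw [hrdef]; exact norm_add_sq_real w (v u)
    have hb := scalar_bounds r (‖w + v u‖) (‖v u‖) ⟪w, v u⟫ hr (norm_nonneg _)
      (norm_nonneg _) h1 h2 h3
    have he : G d (w + v u) - G d w - ⟪gradG d w, v u⟫ =
        ‖w + v u‖/(1+‖w + v u‖) - r/(1+r) - (r*(1+r)^2)⁻¹ * ⟪w, v u⟫ := by
      rw [hgradG, real_inner_smul_left, G, G, s1, hrdef]
    rw [he]
    exact hb
  -- the integrand as a function
  have hfun : (fun u => G d (x - z + c x u - c z u) - G d (x - z) -
      ⟪gradG d (x - z), c x u - c z u⟫) = (fun u => G d (w + v u) - G d w - ⟪gradG d w, v u⟫) := by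
    funext u
    rw [hwdef, hvdef, add_sub_assoc]
  -- measurability
  have hvmeas : Measurable v := (hmeas x).sub (hmeas z)
  have hGcont : Continuous (G d) := by
    apply Continuous.div continuous_norm (continuous_const.add continuous_norm)
    intro y; exact (add_pos_of_pos_of_nonneg one_pos (norm_nonneg y)).ne'
  have hmeas_h : AEStronglyMeasurable (fun u => G d (w + v u) - G d w - ⟪gradG d w, v u⟫) ν := by
    apply Measurable.aestronglyMeasurable
    apply Measurable.sub
    · apply Measurable.sub
      · exact (hGcont.measurable.comp (hvmeas.const_add w))
      · exact measurable_const
    · exact (continuous_const.inner continuous_id).measurable.comp hvmeas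
  -- integrability
  have hint : Integrable (fun u => G d (w + v u) - G d w - ⟪gradG d w, v u⟫) ν := by
    apply Integrable.mono' (hg_int.const_mul (max 1 (2*r)⁻¹)) hmeas_h
    filter_upwards with u
    rw [Real.norm_eq_abs]
    exact (key u).2
  constructor
  · rw [hfun]; exact hint
  -- the inequality
  have hKpos : (0:ℝ) < (2*r*(1+r)^2)⁻¹ := by positivity
  have hint_le : (∫ u, (G d (w + v u) - G d w - ⟪gradG d w, v u⟫) ∂ν) ≤
      (2*r*(1+r)^2)⁻¹ * ∫ u, g u ∂ν := by
    rw [← integral_const_mul]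
    exact integral_mono hint (hg_int.const_mul _) (fun u => (key u).1)
  have htrace : Matrix.trace ((σ x - σ z) * (σ x - σ z)ᵀ * hessG d w) ≤
      s1 r * ∑ i, ∑ j, ((σ x - σ z) i j)^2 := trace_bound w hw (σ x - σ z)
  have hinner : ⟪b x - b z, gradG d w⟫ = s1 r * ⟪w, b x - b z⟫ := by
    rw [hgradG, real_inner_smul_right, real_inner_comm]
  have hs1K : s1 r = 2 * (2*r*(1+r)^2)⁻¹ := by
    rw [s1]
    field_simp
  have hsum' : (∫ u, g u ∂ν) + 2 * ⟪w, b x - b z⟫ + (∑ i, ∑ j, (σ x i j - σ z i j)^2) ≤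
      2 * κ * r * ϱ r := hsum
  have hmatentry : (∑ i, ∑ j, ((σ x - σ z) i j)^2) = ∑ i, ∑ j, (σ x i j - σ z i j)^2 := by
    simp [Matrix.sub_apply]
  rw [hfun, hinner]
  have hstep : (1/2) * Matrix.trace ((σ x - σ z) * (σ x - σ z)ᵀ * hessG d w) +
      s1 r * ⟪w, b x - b z⟫ + (∫ u, (G d (w + v u) - G d w - ⟪gradG d w, v u⟫) ∂ν) ≤
      (2*r*(1+r)^2)⁻¹ * (2 * κ * r * ϱ r) := by
    calc (1/2) * Matrix.trace ((σ x - σ z) * (σ x - σ z)ᵀ * hessG d w) +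
        s1 r * ⟪w, b x - b z⟫ + (∫ u, (G d (w + v u) - G d w - ⟪gradG d w, v u⟫) ∂ν)
        ≤ (1/2) * (s1 r * ∑ i, ∑ j, (σ x i j - σ z i j)^2) + s1 r * ⟪w, b x - b z⟫ +
          (2*r*(1+r)^2)⁻¹ * ∫ u, g u ∂ν := by
          rw [← hmatentry]
          have := mul_le_mul_of_nonneg_left htrace (by norm_num : (0:ℝ) ≤ 1/2)
          linarith [hint_le]
      _ = (2*r*(1+r)^2)⁻¹ * ((∫ u, g u ∂ν) + 2 * ⟪w, b x - b z⟫ +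
          (∑ i, ∑ j, (σ x i j - σ z i j)^2)) := by
          rw [hs1K]; ring
      _ ≤ (2*r*(1+r)^2)⁻¹ * (2 * κ * r * ϱ r) :=
          mul_le_mul_of_nonneg_left hsum' hKpos.le
  refine le_trans hstep ?_
  have hϱ := hϱF r hr
  have heF : F r = r / (1+r) := rfl
  have e : (2*r*(1+r)^2)⁻¹ * (2 * κ * r * ϱ r) = κ * ϱ r / (1+r)^2 := by
    field_simp
  rw [e, div_le_iff₀ (by positivity : (0:ℝ) < (1+r)^2), heF]
  nlinarith [mul_le_mul_of_nonneg_left hϱ hκ.le]
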